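/- Let r and s be coprime integers with 2 ≤ r < s, g = (r−1)(s−1)/2, N the increasing enumeration of the numerical semigroup generated by r and s, and Λ_i = g − N(i−1) + (i−1) for i = 1, …, g. Then for every k with 0 ≤ k ≤ g−1, setting n_k = #{ℓ ∈ ℕ : N(ℓ) ≤ g−k−1}, one has Σ_{ℓ=0}^{n_k−1} (2g − N(ℓ) − N(k+ℓ) − 1) = Σ_{i=k+1}^{g} Λ_i = Σ_{i=k}^{g−1} (g − N(i) + i). -/

import Mathlib

/-- Membership in the numerical semigroup generated by `r` and `s`. -/
def inSg (r s n : ℕ) : Prop := ∃ a b : ℕ, n = a * r + b * s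

/-- The Young diagram row lengths `Λ i = g - N(i-1) + (i-1)` attached to the
Weierstrass gap sequence. -/
def Lam (g : ℕ) (N : ℕ → ℕ) (i : ℕ) : ℕ := g + (i - 1) - N (i - 1)

/-- `nkDef g k N = #{ℓ : N ℓ ≤ g - k - 1}`. -/
noncomputable def nkDef (g k : ℕ) (N : ℕ → ℕ) : ℕ :=
  Set.ncard {ℓ : ℕ | N ℓ ≤ g - k - 1}

namespace VOIAux

/-- Integer version of membership in the semigroup. -/
def PZ (r s : ℕ) (z : ℤ) : Prop := ∃ a b : ℤ, 0 ≤ a ∧ 0 ≤ b ∧ z = a * r + b * s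

lemma inSg_iff_PZ {r s : ℕ} (n : ℕ) : inSg r s n ↔ PZ r s n := by
  constructor
  · rintro ⟨a, b, rfl⟩
    exact ⟨a, b, by positivity, by positivity, by push_cast; ring⟩
  · rintro ⟨a, b, ha, hb, h⟩
    refine ⟨a.toNat, b.toNat, ?_⟩
    have h2 : (n : ℤ) = ((a.toNat * r + b.toNat * s : ℕ) : ℤ) := by
      push_cast [Int.toNat_of_nonneg ha, Int.toNat_of_nonneg hb]
      linarith [h]
    exact_mod_cast h2

lemma PZ_nonneg {r s : ℕ} {z : ℤ} (h : PZ r s z) : 0 ≤ z := by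
  obtain ⟨a, b, ha, hb, rfl⟩ := h
  have h1 : (0:ℤ) ≤ a * r := by positivity
  have h2 : (0:ℤ) ≤ b * s := by positivity
  linarith

lemma repr_uniq {r s : ℕ} (hco : Nat.Coprime r s) (hr : 0 < r) {a b a' b' : ℤ}
    (hb0 : 0 ≤ b) (hbr : b < r) (hb0' : 0 ≤ b') (hbr' : b' < r)
    (h : a * r + b * s = a' * r + b' * s) : a = a' ∧ b = b' := by
  have hcop : IsCoprime (r : ℤ) s := hco.isCoprime
  have hdvd : (r : ℤ) ∣ (b - b') * s := ⟨a' - a, by linear_combination h⟩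
  obtain ⟨c, hc⟩ := hcop.dvd_of_dvd_mul_right hdvd
  have hr' : (0:ℤ) < r := by exact_mod_cast hr
  have hc1 : c < 1 := by nlinarith
  have hc2 : -1 < c := by nlinarith
  have hc0 : c = 0 := by omega
  have hbb : b = b' := by rw [hc0, mul_zero] at hc; linarith
  subst hbb
  constructor
  · have : a * (r:ℤ) = a' * r := by linarith
    exact mul_right_cancel₀ (by exact_mod_cast hr.ne') this
  · rfl

lemma repr_spec {r s : ℕ} (hco : Nat.Coprime r s) (hr : 0 < r) (z : ℤ) :
    ∃ a b : ℤ, 0 ≤ b ∧ b < r ∧ z = a * r + b * s ∧ (PZ r s z ↔ 0 ≤ a) := by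
  have hcop : IsCoprime (r : ℤ) s := hco.isCoprime
  obtain ⟨u, v, huv⟩ := hcop
  have hr' : (0:ℤ) < r := by exact_mod_cast hr
  have hrne : (r:ℤ) ≠ 0 := hr'.ne'
  have hmod := Int.mul_ediv_add_emod (z * v) r
  refine ⟨z * u + (z * v / r) * s, (z * v) % r, Int.emod_nonneg _ hrne,
    Int.emod_lt_of_pos _ hr', ?_, ?_⟩
  · linear_combination -z * huv - (s : ℤ) * hmod
  · constructor
    · rintro ⟨a', b', ha', hb', hz⟩
      have hmod' := Int.mul_ediv_add_emod b' r
      have hm0 : 0 ≤ b' / r := Int.ediv_nonneg hb' hr'.le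
      have heq : (a' + (b' / r) * s) * r + (b' % r) * s
          = (z * u + (z * v / r) * s) * r + ((z * v) % r) * s := by
        have hz' : z = (a' + (b' / r) * s) * r + (b' % r) * s := by
          linear_combination hz - (s : ℤ) * hmod'
        linear_combination -hz' - z * huv - (s : ℤ) * hmod
      obtain ⟨ha, _⟩ := repr_uniq hco hr (Int.emod_nonneg _ hrne)
        (Int.emod_lt_of_pos _ hr') (Int.emod_nonneg _ hrne) (Int.emod_lt_of_pos _ hr')
        heq.symm
      have hs0 : (0:ℤ) ≤ s := by positivity
      nlinarith
    · intro ha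
      exact ⟨z * u + (z * v / r) * s, (z * v) % r, ha, Int.emod_nonneg _ hrne,
        by linear_combination -z * huv - (s : ℤ) * hmod⟩

lemma PZ_symm {r s : ℕ} (hco : Nat.Coprime r s) (hr : 0 < r) (z : ℤ) :
    PZ r s ((r:ℤ) * s - r - s - z) ↔ ¬ PZ r s z := by
  have hr' : (0:ℤ) < r := by exact_mod_cast hr
  obtain ⟨a, b, hb0, hbr, hz, hiff⟩ := repr_spec hco hr z
  obtain ⟨a₂, b₂, hb02, hbr2, hz2, hiff2⟩ := repr_spec hco hr ((r:ℤ) * s - r - s - z)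
  have heq : a₂ * r + b₂ * s = (-1 - a) * r + ((r:ℤ) - 1 - b) * s := by
    linear_combination -hz2 - hz
  obtain ⟨ha, _⟩ := repr_uniq hco hr hb02 hbr2 (by linarith) (by linarith) heq
  rw [hiff2, hiff, ha]
  omega

/-- Two strictly monotone maps `ℕ → ℕ` with the same range agree. -/
lemma strictMono_range_eq {f h : ℕ → ℕ} (hf : StrictMono f) (hh : StrictMono h)
    (hfh : ∀ m, (∃ n, f n = m) ↔ ∃ n, h n = m) : ∀ n, f n = h n := by
  intro n
  induction n using Nat.strong_induction_on with
  | _ n IH =>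
    obtain ⟨j, hj⟩ := (hfh (f n)).mp ⟨n, rfl⟩
    obtain ⟨i, hi⟩ := (hfh (h n)).mpr ⟨n, rfl⟩
    have hjge : n ≤ j := by
      by_contra hx
      push_neg at hx
      have h1 := IH j hx
      have h2 : f j < f n := hf hx
      omega
    have hige : n ≤ i := by
      by_contra hx
      push_neg at hx
      have h1 := IH i hx
      have h2 : h i < h n := hh hx
      omega
    have h3 : h n ≤ h j := hh.monotone hjge
    have h4 : f n ≤ f i := hf.monotone hige
    omega

lemma strictMono_add_le {f : ℕ → ℕ} (hf : StrictMono f) (a d : ℕ) :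
    f a + d ≤ f (a + d) := by
  induction d with
  | zero => simp
  | succ d ih =>
    have := hf (show a + d < a + (d + 1) by omega)
    omega

end VOIAux

open VOIAux in
/-- The two expressions for the vanishing order `N_k`:
`Σ_{ℓ=0}^{n_k-1} (2g - N(ℓ) - N(k+ℓ) - 1) = Σ_{i=k+1}^{g} Λ_i
 = Σ_{i=k}^{g-1} (g - N(i) + i)`. -/
theorem vanishing_order_identity (r s g : ℕ) (N : ℕ → ℕ)
    (hr : 2 ≤ r) (hrs : r < s) (hco : Nat.Coprime r s)
    (hg : 2 * g = (r - 1) * (s - 1))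
    (hmono : StrictMono N)
    (hmem : ∀ n, inSg r s (N n))
    (hsurj : ∀ m, inSg r s m → ∃ n, N n = m)
    (k : ℕ) (hk : k ≤ g - 1) :
    (∑ ℓ ∈ Finset.range (nkDef g k N),
        ((2 * g : ℤ) - (N ℓ : ℤ) - (N (k + ℓ) : ℤ) - 1))
      = ∑ i ∈ Finset.Icc (k + 1) g, (Lam g N i : ℤ) ∧
    (∑ i ∈ Finset.Icc (k + 1) g, (Lam g N i : ℤ))
      = ∑ i ∈ Finset.Ico k g, ((g : ℤ) - (N i : ℤ) + (i : ℤ)) := by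
  classical
  set P : ℕ → Prop := inSg r s with hP
  have hr0 : 0 < r := by omega
  have hs0 : 0 < s := by omega
  -- genus is positive
  have hg1 : 1 ≤ g := by
    have h1 : 1 ≤ r - 1 := by omega
    have h2 : 2 ≤ s - 1 := by omega
    have := Nat.mul_le_mul h1 h2
    omega
  have hk' : k ≤ g - 1 := hk
  -- Frobenius number relation over ℤ
  have hF : (r:ℤ) * s - r - s = 2 * (g:ℤ) - 1 := by
    have h1 : 2 * (g:ℤ) = ((r:ℤ) - 1) * ((s:ℤ) - 1) := by
      have h0 := congrArg (fun n : ℕ => (n : ℤ)) hg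
      push_cast [Nat.cast_sub (show 1 ≤ r by omega), Nat.cast_sub (show 1 ≤ s by omega)] at h0
      exact h0
    linear_combination -h1
  -- symmetry of the semigroup
  have hsymm : ∀ m : ℕ, m < 2 * g → (P (2 * g - 1 - m) ↔ ¬ P m) := by
    intro m hm
    have hcast : ((2 * g - 1 - m : ℕ) : ℤ) = (r:ℤ) * s - r - s - m := by
      rw [hF]; push_cast [Nat.cast_sub (by omega : m ≤ 2 * g - 1), Nat.cast_sub (by omega : 1 ≤ 2 * g)]
      push_cast
      ring
    rw [hP, inSg_iff_PZ, inSg_iff_PZ, hcast]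
    exact PZ_symm hco hr0 (m : ℤ)
  have hbig : ∀ m : ℕ, 2 * g ≤ m → P m := by
    intro m hm
    have h2 := PZ_symm hco hr0 ((r:ℤ) * s - r - s - m)
    rw [show (r:ℤ) * s - r - s - ((r:ℤ) * s - r - s - m) = (m:ℤ) by ring] at h2
    rw [hP, inSg_iff_PZ]
    by_contra hnp
    have h4 : PZ r s ((r:ℤ) * s - r - s - m) := by
      by_contra h5
      exact hnp (h2.mpr h5)
    have h6 := PZ_nonneg h4
    rw [hF] at h6
    have hm' : 2 * (g:ℤ) ≤ (m:ℤ) := by exact_mod_cast hm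
    linarith
  have hP0 : P 0 := ⟨0, 0, by simp⟩
  -- the semigroup is infinite
  have hinf : {n : ℕ | P n}.Infinite := by
    apply Set.infinite_of_injective_forall_mem (f := fun m : ℕ => m * r)
    · intro a b hab
      exact Nat.eq_of_mul_eq_mul_right hr0 hab
    · intro m
      exact ⟨m, 0, by simp⟩
  -- N is the canonical enumeration
  have hNnth : ∀ n, N n = Nat.nth P n := by
    apply strictMono_range_eq hmono (Nat.nth_strictMono hinf)
    intro m
    constructor
    · rintro ⟨n, rfl⟩
      exact ⟨Nat.count P (N n), Nat.nth_count (hmem n)⟩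
    · rintro ⟨n, rfl⟩
      exact hsurj _ (Nat.nth_mem_of_infinite hinf n)
  set cnt : ℕ → ℕ := Nat.count P with hcnt
  have hcN : ∀ n, cnt (N n) = n := by
    intro n
    rw [hNnth]
    exact Nat.count_nth_of_infinite hinf n
  have hNc : ∀ m, P m → N (cnt m) = m := by
    intro m hm
    rw [hNnth]
    exact Nat.nth_count hm
  have hPN : ∀ n, P (N n) := hmem
  -- counting characterization
  have hlt : ∀ ℓ t : ℕ, N ℓ ≤ t ↔ ℓ < cnt (t + 1) := by
    intro ℓ t
    constructor
    · intro h
      have h1 : cnt (N ℓ + 1) ≤ cnt (t + 1) := Nat.count_monotone P (by omega)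
      have h2 : cnt (N ℓ + 1) = ℓ + 1 := by
        rw [hcnt, Nat.count_succ, if_pos (hPN ℓ)]
        rw [← hcnt, hcN]
      omega
    · intro h
      by_contra hx
      push_neg at hx
      have h1 : cnt (t + 1) ≤ cnt (N ℓ) := Nat.count_monotone P (by omega)
      rw [hcN] at h1
      omega
  -- pairing lemma: symmetric intervals contain as many elements as gaps
  have hpair : ∀ A : ℕ, A ≤ g → ((Finset.Ico A (2 * g - A)).filter P).card = g - A := by
    intro A hA
    have hcards : ((Finset.Ico A (2 * g - A)).filter P).card
        = ((Finset.Ico A (2 * g - A)).filter (fun m => ¬ P m)).card := by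
      apply Finset.card_nbij' (fun m => 2 * g - 1 - m) (fun m => 2 * g - 1 - m)
      · intro a ha
        simp only [Finset.mem_coe, Finset.mem_filter, Finset.mem_Ico] at ha ⊢
        refine ⟨⟨by omega, by omega⟩, ?_⟩
        intro hpa
        exact ((hsymm a (by omega)).mp hpa) ha.2
      · intro a ha
        simp only [Finset.mem_coe, Finset.mem_filter, Finset.mem_Ico] at ha ⊢
        exact ⟨⟨by omega, by omega⟩, (hsymm a (by omega)).mpr ha.2⟩
      · intro a ha
        simp only [Finset.mem_coe, Finset.mem_filter, Finset.mem_Ico] at ha ⊢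
        omega
      · intro a ha
        simp only [Finset.mem_coe, Finset.mem_filter, Finset.mem_Ico] at ha ⊢
        omega
    have hsum := Finset.card_filter_add_card_filter_not
      (s := Finset.Ico A (2 * g - A)) (p := P)
    rw [Nat.card_Ico] at hsum
    omega
  have hcnt2g : cnt (2 * g) = g := by
    rw [hcnt, Nat.count_eq_card_filter_range, Finset.range_eq_Ico]
    have := hpair 0 (by omega)
    simpa using this
  have hcountgk : ∀ k' : ℕ, k' ≤ g → cnt (g + k') = cnt (g - k') + k' := by
    intro k' hk'g
    have hsplit : Finset.range (g + k') = Finset.range (g - k') ∪ Finset.Ico (g - k') (g + k') := by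
      simp only [Finset.range_eq_Ico]
      exact (Finset.Ico_union_Ico_eq_Ico (by omega) (by omega)).symm
    have hdisj : Disjoint ((Finset.range (g - k')).filter P)
        ((Finset.Ico (g - k') (g + k')).filter P) := by
      apply Finset.disjoint_filter_filter
      rw [Finset.range_eq_Ico]
      exact Finset.Ico_disjoint_Ico_consecutive _ _ _
    have hIco : Finset.Ico (g - k') (g + k') = Finset.Ico (g - k') (2 * g - (g - k')) := by
      congr 1
      omega
    have h2 : ((Finset.Ico (g - k') (g + k')).filter P).card = k' := by
      rw [hIco, hpair (g - k') (by omega)]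
      omega
    rw [hcnt, Nat.count_eq_card_filter_range, hsplit, Finset.filter_union,
      Finset.card_union_of_disjoint hdisj, h2, Nat.count_eq_card_filter_range]
  have hN0 : N 0 = 0 := by
    have := hNc 0 hP0
    rwa [hcnt, Nat.count_zero] at this
  have hNg : N g = 2 * g := by
    have := hNc (2 * g) (hbig _ le_rfl)
    rwa [hcnt2g] at this
  have hNle : ∀ i : ℕ, i ≤ g → N i ≤ g + i := by
    intro i hi
    have h1 : N i + (g - i) ≤ N (i + (g - i)) := strictMono_add_le hmono i (g - i)
    rw [show i + (g - i) = g by omega, hNg] at h1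
    omega
  -- the key downward induction
  have key : ∀ d k' : ℕ, k' + d + 1 = g →
      (∑ ℓ ∈ Finset.range (cnt (g - k')), ((2 * g : ℤ) - (N ℓ : ℤ) - (N (k' + ℓ) : ℤ) - 1))
        = ∑ i ∈ Finset.Ico k' g, ((g : ℤ) - (N i : ℤ) + (i : ℤ)) := by
    intro d
    induction d with
    | zero =>
      intro k' hk'g
      have hgk : g - k' = 1 := by omega
      have hc1 : cnt 1 = 1 := by
        rw [hcnt, Nat.count_one, if_pos hP0]
      rw [hgk, hc1, Finset.sum_range_one]
      rw [show Finset.Ico k' g = {k'} by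
        rw [show g = k' + 1 by omega]; exact Nat.Ico_succ_singleton k']
      rw [Finset.sum_singleton, hN0, Nat.add_zero]
      have hcast : (k' : ℤ) = (g : ℤ) - 1 := by
        have : (k' : ℤ) + 1 = g := by exact_mod_cast congrArg (Nat.cast : ℕ → ℤ) hk'g
        linarith
      rw [hcast]
      push_cast
      ring
    | succ d IH =>
      intro k' hk'g
      have hIH := IH (k' + 1) (by omega)
      set n' := cnt (g - (k' + 1)) with hn'def
      have hsucc : cnt (g - k') = n' + if P (g - (k' + 1)) then 1 else 0 := by
        have h1 : g - k' = (g - (k' + 1)) + 1 := by omega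
        rw [h1, hcnt, Nat.count_succ, hn'def, hcnt]
      -- telescoping identity
      have htel : ∀ M : ℕ,
          (∑ ℓ ∈ Finset.range M, ((2 * g : ℤ) - (N ℓ : ℤ) - (N (k' + ℓ) : ℤ) - 1))
            = (∑ ℓ ∈ Finset.range M, ((2 * g : ℤ) - (N ℓ : ℤ) - (N (k' + 1 + ℓ) : ℤ) - 1))
              + (N (k' + M) : ℤ) - (N k' : ℤ) := by
        intro M
        have hts := Finset.sum_range_sub (f := fun ℓ => (N (k' + ℓ) : ℤ)) M
        have hterm : ∀ ℓ : ℕ, ((2 * g : ℤ) - (N ℓ : ℤ) - (N (k' + ℓ) : ℤ) - 1)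
            = ((2 * g : ℤ) - (N ℓ : ℤ) - (N (k' + 1 + ℓ) : ℤ) - 1)
              + ((N (k' + (ℓ + 1)) : ℤ) - (N (k' + ℓ) : ℤ)) := by
          intro ℓ
          rw [show k' + (ℓ + 1) = k' + 1 + ℓ by omega]
          ring
        rw [Finset.sum_congr rfl (fun ℓ _ => hterm ℓ), Finset.sum_add_distrib, hts]
        simp only [Nat.add_zero]
        ring
      have hbot : (∑ i ∈ Finset.Ico k' g, ((g : ℤ) - (N i : ℤ) + (i : ℤ)))
          = ((g : ℤ) - (N k' : ℤ) + (k' : ℤ))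
            + ∑ i ∈ Finset.Ico (k' + 1) g, ((g : ℤ) - (N i : ℤ) + (i : ℤ)) :=
        Finset.sum_eq_sum_Ico_succ_bot (by omega) _
      by_cases hP1 : P (g - (k' + 1))
      · have hcntk : cnt (g - k') = n' + 1 := by rw [hsucc, if_pos hP1]
        have hNn' : N n' = g - (k' + 1) := by
          have h2 := hNc _ hP1
          rwa [← hn'def] at h2
        have hNn'c : (N n' : ℤ) = (g : ℤ) - (k' : ℤ) - 1 := by
          rw [hNn']
          have h1 : k' + 2 ≤ g := by omega
          omega
        rw [hcntk, Finset.sum_range_succ, htel n', hIH, hbot]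
        rw [hNn'c]
        ring
      · have hcntk : cnt (g - k') = n' := by rw [hsucc, if_neg hP1]; omega
        have hPgk : P (g + k') := by
          have h1 := hsymm (g - (k' + 1)) (by omega)
          rw [show 2 * g - 1 - (g - (k' + 1)) = g + k' by omega] at h1
          exact h1.mpr hP1
        have hc2 : cnt (g + k') = n' + k' := by
          rw [hcountgk k' (by omega), hcntk]
        have hNkn : N (k' + n') = g + k' := by
          have := hNc _ hPgk
          rw [hc2] at this
          rwa [Nat.add_comm]
        rw [hcntk, htel n', hIH, hbot]
        have hNknc : (N (k' + n') : ℤ) = (g : ℤ) + (k' : ℤ) := by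
          rw [hNkn]; push_cast; ring
        rw [hNknc]
        ring
  -- identify nkDef with the count
  have hnk : nkDef g k N = cnt (g - k) := by
    unfold nkDef
    have hset : {ℓ : ℕ | N ℓ ≤ g - k - 1} = ↑(Finset.range (cnt (g - k))) := by
      ext ℓ
      simp only [Set.mem_setOf_eq, Finset.coe_range, Set.mem_Iio]
      rw [show g - k = (g - k - 1) + 1 by omega]
      exact hlt ℓ (g - k - 1)
    rw [hset, Set.ncard_coe_finset, Finset.card_range]
  -- the second equality
  have h2 : (∑ i ∈ Finset.Icc (k + 1) g, (Lam g N i : ℤ))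
      = ∑ i ∈ Finset.Ico k g, ((g : ℤ) - (N i : ℤ) + (i : ℤ)) := by
    rw [← Finset.Ico_add_one_right_eq_Icc, ← Finset.map_add_right_Ico k g 1, Finset.sum_map]
    apply Finset.sum_congr rfl
    intro i hi
    have hi' : i < g := (Finset.mem_Ico.mp hi).2
    have hle := hNle i hi'.le
    simp only [addRightEmbedding_apply]
    have hLam : Lam g N (i + 1) = g + i - N i := by simp [Lam]
    rw [hLam, Nat.cast_sub hle]
    push_cast
    ring
  refine ⟨?_, h2⟩
  rw [hnk, h2]
  exact key (g - 1 - k) k (by omega)
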